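/- Let X = ℝ³ with the 3-norm and J its duality map. Let v = (3,−2,−1), w = (1,−3,2), y = (25,37,77), and ψ = (−β,−β,−β) with 0 < β < 14·∛4/139. Then ⟨Jv − ψ, y⟩ > 0 and ⟨Jw − ψ, y⟩ > 0, but for g = (2/3)v + (1/3)w one has ⟨Jg − ψ, y⟩ = −14·∛4 + 139β < 0. Hence {x ∈ ℝ³ : ⟨Jx − ψ, y⟩ ≥ 0} is not convex. -/

import Mathlib

/-- The 3-norm on ℝ³. -/
noncomputable def norm3 (z : ℝ × ℝ × ℝ) : ℝ :=
  (|z.1| ^ 3 + |z.2.1| ^ 3 + |z.2.2| ^ 3) ^ ((1 : ℝ) / 3)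

/-- The 3/2-norm on the dual of (ℝ³, ‖·‖₃). -/
noncomputable def norm32 (ψ : ℝ × ℝ × ℝ) : ℝ :=
  (|ψ.1| ^ ((3 : ℝ) / 2) + |ψ.2.1| ^ ((3 : ℝ) / 2) + |ψ.2.2| ^ ((3 : ℝ) / 2)) ^ ((2 : ℝ) / 3)

/-- The normalized duality map of (ℝ³, ‖·‖₃), with J 0 = 0. -/
noncomputable def Jmap (z : ℝ × ℝ × ℝ) : ℝ × ℝ × ℝ :=
  if z = 0 then 0
  else (|z.1| ^ 2 * Real.sign z.1 / norm3 z,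
        |z.2.1| ^ 2 * Real.sign z.2.1 / norm3 z,
        |z.2.2| ^ 2 * Real.sign z.2.2 / norm3 z)

/-- The standard pairing (dot product) between ℝ³ and its dual. -/
def dot (a b : ℝ × ℝ × ℝ) : ℝ := a.1 * b.1 + a.2.1 * b.2.1 + a.2.2 * b.2.2

lemma cube_inj {a b : ℝ} (ha : 0 ≤ a) (hb : 0 ≤ b) (h : a ^ 3 = b ^ 3) : a = b := by
  rcases lt_trichotomy a b with h' | h' | h'
  · nlinarith [pow_lt_pow_left₀ h' ha (n := 3) (by norm_num)]
  · exact h'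
  · nlinarith [pow_lt_pow_left₀ h' hb (n := 3) (by norm_num)]

lemma rpow_third_cube {x : ℝ} (hx : 0 ≤ x) : (x ^ ((1 : ℝ) / 3)) ^ 3 = x := by
  rw [← Real.rpow_natCast (x ^ ((1 : ℝ) / 3)) 3, ← Real.rpow_mul hx]
  norm_num

/-- with ψ = (−β,−β,−β), 0 < β < 14∛4/139, the set
{x : ⟨Jx − ψ, y⟩ ≥ 0} is not convex. -/
theorem stmt3 (β : ℝ) (hβ : 0 < β) (hβ' : β < 14 * (4 : ℝ) ^ ((1 : ℝ) / 3) / 139) :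
    let v : ℝ × ℝ × ℝ := (3, -2, -1)
    let w : ℝ × ℝ × ℝ := (1, -3, 2)
    let y : ℝ × ℝ × ℝ := (25, 37, 77)
    let ψ : ℝ × ℝ × ℝ := (-β, -β, -β)
    let g : ℝ × ℝ × ℝ := (2 / 3 : ℝ) • v + (1 / 3 : ℝ) • w
    0 < dot (Jmap v - ψ) y ∧ 0 < dot (Jmap w - ψ) y ∧
    dot (Jmap g - ψ) y = -14 * (4 : ℝ) ^ ((1 : ℝ) / 3) + 139 * β ∧
    dot (Jmap g - ψ) y < 0 ∧
    ¬ Convex ℝ {x : ℝ × ℝ × ℝ | 0 ≤ dot (Jmap x - ψ) y} := by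
  intro v w y ψ g
  have hg : g = ((7 : ℝ)/3, -(7 : ℝ)/3, (0 : ℝ)) := by
    show ((2/3 : ℝ) • ((3 : ℝ), (-2 : ℝ), (-1 : ℝ)) + (1/3 : ℝ) • ((1 : ℝ), (-3 : ℝ), (2 : ℝ))) = _
    simp [Prod.ext_iff, Prod.smul_def, smul_eq_mul]
    norm_num
  -- norms
  have hnv : norm3 v = (36 : ℝ) ^ ((1 : ℝ)/3) := by
    simp only [norm3]
    norm_num
  have hnw : norm3 w = (36 : ℝ) ^ ((1 : ℝ)/3) := by
    simp only [norm3]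
    norm_num
  have hng : norm3 g = ((686 : ℝ)/27) ^ ((1 : ℝ)/3) := by
    rw [hg]; simp only [norm3]
    norm_num [abs_of_nonneg, abs_of_nonpos]
  have hnvpos : (0 : ℝ) < norm3 v := by rw [hnv]; positivity
  have hnwpos : (0 : ℝ) < norm3 w := by rw [hnw]; positivity
  have hngpos : (0 : ℝ) < norm3 g := by rw [hng]; positivity
  set t : ℝ := (4 : ℝ) ^ ((1 : ℝ)/3) with ht
  have htpos : 0 < t := by rw [ht]; positivity
  have ht3 : t ^ 3 = 4 := rpow_third_cube (by norm_num)
  have hng3 : (norm3 g) ^ 3 = 686/27 := by rw [hng]; exact rpow_third_cube (by norm_num)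
  -- Jmap values
  have hJv : Jmap v = (9 / norm3 v, -4 / norm3 v, -1 / norm3 v) := by
    rw [Jmap, if_neg (by simp [v, Prod.ext_iff])]
    have h1 : Real.sign (3 : ℝ) = 1 := Real.sign_of_pos (by norm_num)
    have h2 : Real.sign (-2 : ℝ) = -1 := Real.sign_of_neg (by norm_num)
    have h3 : Real.sign (-1 : ℝ) = -1 := Real.sign_of_neg (by norm_num)
    show (|(3:ℝ)| ^ 2 * Real.sign (3:ℝ) / norm3 v, |(-2:ℝ)| ^ 2 * Real.sign (-2:ℝ) / norm3 v,
      |(-1:ℝ)| ^ 2 * Real.sign (-1:ℝ) / norm3 v) = _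
    rw [h1, h2, h3]
    norm_num
  have hJw : Jmap w = (1 / norm3 w, -9 / norm3 w, 4 / norm3 w) := by
    rw [Jmap, if_neg (by simp [w, Prod.ext_iff])]
    have h1 : Real.sign (1 : ℝ) = 1 := Real.sign_of_pos (by norm_num)
    have h2 : Real.sign (-3 : ℝ) = -1 := Real.sign_of_neg (by norm_num)
    have h3 : Real.sign (2 : ℝ) = 1 := Real.sign_of_pos (by norm_num)
    show (|(1:ℝ)| ^ 2 * Real.sign (1:ℝ) / norm3 w, |(-3:ℝ)| ^ 2 * Real.sign (-3:ℝ) / norm3 w,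
      |(2:ℝ)| ^ 2 * Real.sign (2:ℝ) / norm3 w) = _
    rw [h1, h2, h3]
    norm_num
  have hJg : Jmap g = ((49/9) / norm3 g, -(49/9) / norm3 g, 0) := by
    rw [hg] at hngpos ⊢
    rw [Jmap, if_neg (by simp [Prod.ext_iff])]
    have h1 : Real.sign ((7:ℝ)/3) = 1 := Real.sign_of_pos (by norm_num)
    have h2 : Real.sign (-(7:ℝ)/3) = -1 := Real.sign_of_neg (by norm_num)
    show (|(7:ℝ)/3| ^ 2 * Real.sign ((7:ℝ)/3) / _, |-(7:ℝ)/3| ^ 2 * Real.sign (-(7:ℝ)/3) / _,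
      |(0:ℝ)| ^ 2 * Real.sign (0:ℝ) / _) = _
    rw [h1, h2, Real.sign_zero]
    refine Prod.ext ?_ (Prod.ext ?_ ?_) <;> norm_num
  -- dot computations
  have hdv : dot (Jmap v - ψ) y = 139 * β := by
    rw [hJv]
    show (9 / norm3 v - -β) * 25 + (-4 / norm3 v - -β) * 37 + (-1 / norm3 v - -β) * 77 = 139 * β
    field_simp
    ring
  have hdw : dot (Jmap w - ψ) y = 139 * β := by
    rw [hJw]
    show (1 / norm3 w - -β) * 25 + (-9 / norm3 w - -β) * 37 + (4 / norm3 w - -β) * 77 = 139 * β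
    field_simp
    ring
  have key : 196 / (3 * norm3 g) = 14 * t := by
    apply cube_inj (by positivity) (by positivity)
    rw [div_pow, mul_pow, mul_pow, hng3, ht3]
    norm_num
  have hdg : dot (Jmap g - ψ) y = -14 * t + 139 * β := by
    rw [hJg]
    show ((49/9) / norm3 g - -β) * 25 + (-(49/9) / norm3 g - -β) * 37 + ((0:ℝ) - -β) * 77
        = -14 * t + 139 * β
    have h196 : (196 : ℝ) = 14 * t * (3 * norm3 g) := by
      rw [← key]; field_simp
    field_simp
    nlinarith [h196]
  have hdgneg : dot (Jmap g - ψ) y < 0 := by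
    rw [hdg]; nlinarith [hβ']
  refine ⟨by rw [hdv]; positivity, by rw [hdw]; positivity, hdg, hdgneg, ?_⟩
  intro hc
  have hv : v ∈ {x : ℝ × ℝ × ℝ | 0 ≤ dot (Jmap x - ψ) y} := by
    simp only [Set.mem_setOf_eq, hdv]; positivity
  have hw : w ∈ {x : ℝ × ℝ × ℝ | 0 ≤ dot (Jmap x - ψ) y} := by
    simp only [Set.mem_setOf_eq, hdw]; positivity
  have := hc hv hw (by norm_num : (0:ℝ) ≤ 2/3) (by norm_num : (0:ℝ) ≤ 1/3) (by norm_num)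
  simp only [Set.mem_setOf_eq] at this
  have hmem : 0 ≤ dot (Jmap g - ψ) y := by
    convert this using 4
  linarith [hdgneg, hmem]
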